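/- Let M ⊆ B(H,K) be a TRO and let A ⊆ B(H), B ⊆ B(K) be norm-closed subalgebras with A = closure(span(M* B M)) and B = closure(span(M A M*)). Then, writing C = closure(span(M* M)) and D = closure(span(M M*)), the spaces A₀ = closure(A + C) and B₀ = closure(B + D) satisfy A₀ = closure(span(M* B₀ M)) and B₀ = closure(span(M A₀ M*)). -/

import Mathlib

open ContinuousLinearMap

noncomputable section

/-- Norm closure of the linear span of a set of operators. -/
def csp {E : Type*} [NormedAddCommGroup E] [NormedSpace ℂ E] (S : Set E) : Set E :=
  closure (Submodule.span ℂ S : Set E)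

namespace TROaux

set_option maxHeartbeats 1000000

variable {E F : Type*} [NormedAddCommGroup E] [NormedSpace ℂ E]
  [NormedAddCommGroup F] [NormedSpace ℂ F]

lemma csp_subset {s : Set E} {p : Submodule ℂ E} (hc : IsClosed (p : Set E)) (h : s ⊆ p) :
    csp s ⊆ p :=
  closure_minimal (fun _ hx => Submodule.span_le.mpr h hx) hc

lemma map_csp (L : E →ₗ[ℂ] F) (hL : Continuous L) {s : Set E} {t : Set F}
    (h : ∀ x ∈ s, L x ∈ Submodule.span ℂ t) {x : E} (hx : x ∈ csp s) : L x ∈ csp t := by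
  have hle : Submodule.span ℂ s ≤ (Submodule.span ℂ t).comap L :=
    Submodule.span_le.mpr h
  exact map_mem_closure hL hx fun y hy => hle hy

lemma aux_bound (R ε : ℝ) (hR : 0 ≤ R) (hε : 0 < ε) :
    ∃ N : ℕ, ∀ x : ℝ, 0 ≤ x → x ≤ R → |x * (1 - (R + 1)⁻¹ * x) ^ N| ≤ ε := by
  have hR1 : (0 : ℝ) < R + 1 := by linarith
  set δ := ε / (R + 1) with hδ
  have hδpos : 0 < δ := div_pos hε hR1
  have hr : max (1 - δ) 0 < 1 := max_lt (by linarith) one_pos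
  obtain ⟨N, hN⟩ := exists_pow_lt_of_lt_one hδpos hr
  refine ⟨N, fun x hx0 hxR => ?_⟩
  have hs0 : 0 ≤ (R + 1)⁻¹ * x := mul_nonneg (inv_nonneg.mpr hR1.le) hx0
  have hs1 : (R + 1)⁻¹ * x ≤ 1 := by
    rw [inv_mul_le_iff₀ hR1]; nlinarith
  have h1s0 : 0 ≤ 1 - (R + 1)⁻¹ * x := by linarith
  have h1s1 : 1 - (R + 1)⁻¹ * x ≤ 1 := by linarith
  rw [abs_of_nonneg (mul_nonneg hx0 (pow_nonneg h1s0 N))]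
  by_cases hxε : x ≤ ε
  · calc x * (1 - (R + 1)⁻¹ * x) ^ N ≤ x * 1 :=
          mul_le_mul_of_nonneg_left (pow_le_one₀ h1s0 h1s1) hx0
      _ = x := mul_one x
      _ ≤ ε := hxε
  · push_neg at hxε
    have hsδ : δ ≤ (R + 1)⁻¹ * x := by
      rw [hδ, div_eq_inv_mul]
      exact mul_le_mul_of_nonneg_left hxε.le (inv_nonneg.mpr hR1.le)
    have hle : 1 - (R + 1)⁻¹ * x ≤ max (1 - δ) 0 := le_trans (by linarith) (le_max_left _ _)
    calc x * (1 - (R + 1)⁻¹ * x) ^ N ≤ (R + 1) * (max (1 - δ) 0) ^ N := by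
          apply mul_le_mul (by linarith) (pow_le_pow_left₀ h1s0 hle N) (pow_nonneg h1s0 N) hR1.le
      _ ≤ (R + 1) * δ := mul_le_mul_of_nonneg_left hN.le hR1.le
      _ = ε := by rw [hδ]; field_simp [hR1.ne']

variable {H K : Type*}
    [NormedAddCommGroup H] [InnerProductSpace ℂ H] [CompleteSpace H]
    [NormedAddCommGroup K] [InnerProductSpace ℂ K] [CompleteSpace K]

lemma one_sub_pow_mem (a : K →L[ℂ] K) (c : ℝ) (N : ℕ) :
    1 - (1 - c • a) ^ N ∈ Submodule.span ℂ {w : K →L[ℂ] K | ∃ k : ℕ, w = a ^ (k + 1)} := by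
  set S := Submodule.span ℂ {w : K →L[ℂ] K | ∃ k : ℕ, w = a ^ (k + 1)} with hS
  have haS : a ∈ S := Submodule.subset_span ⟨0, (pow_one a).symm⟩
  have hmul : ∀ s ∈ S, a * s ∈ S := by
    intro s hs
    have hmap : S.map (LinearMap.mulLeft ℂ a) ≤ S := by
      rw [hS, Submodule.map_span, Submodule.span_le]
      rintro _ ⟨w, ⟨k, rfl⟩, rfl⟩
      exact Submodule.subset_span ⟨k + 1, by rw [LinearMap.mulLeft_apply, ← pow_succ']⟩
    exact hmap ⟨s, hs, rfl⟩
  induction N with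
  | zero => simpa using S.zero_mem
  | succ N ih =>
    have hrw : 1 - (1 - c • a) ^ (N + 1)
        = c • a + (1 - c • a) * (1 - (1 - c • a) ^ N) := by
      rw [mul_sub, mul_one, ← pow_succ']
      abel
    rw [hrw]
    refine S.add_mem (S.smul_of_tower_mem c haS) ?_
    have hexp : (1 - c • a) * (1 - (1 - c • a) ^ N)
        = (1 - (1 - c • a) ^ N) - c • (a * (1 - (1 - c • a) ^ N)) := by
      rw [sub_mul, one_mul, smul_mul_assoc]
    rw [hexp]
    exact S.sub_mem ih (S.smul_of_tower_mem c (hmul _ ih))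

lemma pow_comp_mem (M : Submodule ℂ (H →L[ℂ] K))
    (hTRO : ∀ m ∈ M, ∀ n ∈ M, ∀ l ∈ M, m ∘L (adjoint n) ∘L l ∈ M)
    {m : H →L[ℂ] K} (hm : m ∈ M) : ∀ k : ℕ, ((m ∘L adjoint m) ^ k) ∘L m ∈ M := by
  intro k
  induction k with
  | zero => simpa [ContinuousLinearMap.one_def] using hm
  | succ k ih =>
    have h := hTRO m hm m hm _ ih
    have hrw : ((m ∘L adjoint m) ^ (k + 1)) ∘L m
        = m ∘L (adjoint m) ∘L (((m ∘L adjoint m) ^ k) ∘L m) := by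
      rw [pow_succ', mul_def, comp_assoc, comp_assoc]
    rw [hrw]; exact h

lemma sa_pow (m : H →L[ℂ] K) (k : ℕ) :
    adjoint ((m ∘L adjoint m) ^ k) = (m ∘L adjoint m) ^ k := by
  have ha : IsSelfAdjoint (m ∘L adjoint m) := by
    rw [IsSelfAdjoint, star_eq_adjoint]; simp [adjoint_comp]
  rw [← star_eq_adjoint]
  exact (ha.pow k).star_eq

lemma pow_mem_Dset (M : Submodule ℂ (H →L[ℂ] K))
    (hTRO : ∀ m ∈ M, ∀ n ∈ M, ∀ l ∈ M, m ∘L (adjoint n) ∘L l ∈ M)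
    {m : H →L[ℂ] K} (hm : m ∈ M) (k : ℕ) :
    (m ∘L adjoint m) ^ (k + 1) ∈ {S : K →L[ℂ] K | ∃ k' ∈ M, ∃ l ∈ M, S = k' ∘L adjoint l} := by
  refine ⟨m, hm, ((m ∘L adjoint m) ^ k) ∘L m, pow_comp_mem M hTRO hm k, ?_⟩
  rw [adjoint_comp, sa_pow, pow_succ', mul_def, comp_assoc]

lemma approx (m : H →L[ℂ] K) {ε : ℝ} (hε : 0 < ε) :
    ∃ P : K →L[ℂ] K,
      P ∈ Submodule.span ℂ {w : K →L[ℂ] K | ∃ k : ℕ, w = (m ∘L adjoint m) ^ (k + 1)} ∧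
      ‖adjoint m - adjoint m ∘L P‖ ≤ ε := by
  rcases subsingleton_or_nontrivial K with hK | hK
  · refine ⟨0, Submodule.zero_mem _, ?_⟩
    have hm0 : adjoint m = 0 := by
      ext x; rw [Subsingleton.elim x (0 : K)]; simp
    simp [hm0, hε.le]
  set a := m ∘L adjoint m with ha_def
  have ha : IsSelfAdjoint a := by
    rw [IsSelfAdjoint, star_eq_adjoint]; simp [ha_def, adjoint_comp]
  have hpos : ∀ x ∈ spectrum ℝ a, 0 ≤ x := by
    have hp : a.IsPositive := by
      have := (isPositive_one (E := H)).conj_adjoint m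
      rwa [ContinuousLinearMap.one_def, ContinuousLinearMap.id_comp] at this
    exact (SpectrumRestricts.nnreal_iff).mp hp.spectrumRestricts
  have hspec_le : ∀ x ∈ spectrum ℝ a, x ≤ ‖a‖ := fun x hx =>
    le_trans (le_abs_self x) (by simpa using spectrum.norm_le_norm_of_mem hx)
  obtain ⟨N, hN⟩ := aux_bound ‖a‖ (ε ^ 2) (norm_nonneg a) (by positivity)
  set c : ℝ := (‖a‖ + 1)⁻¹ with hc_def
  set v : K →L[ℂ] K := 1 - c • a with hv_def
  refine ⟨1 - v ^ N, by rw [hv_def]; exact one_sub_pow_mem a c N, ?_⟩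
  have hTrw : adjoint m - adjoint m ∘L (1 - v ^ N) = adjoint m ∘L v ^ N := by
    rw [comp_sub, ContinuousLinearMap.one_def, comp_id]
    abel
  rw [hTrw]
  have hcomm : Commute a (v ^ N) :=
    (Commute.sub_right (Commute.one_right a) ((Commute.refl a).smul_right c)).pow_right N
  have hTT : adjoint (adjoint m ∘L v ^ N) ∘L (adjoint m ∘L v ^ N) = a * (v ^ N * v ^ N) := by
    have hvsa : IsSelfAdjoint v := by
      have hsmul : IsSelfAdjoint (c • a) := by
        rw [IsSelfAdjoint, star_smul, star_trivial, ha.star_eq]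
      exact (IsSelfAdjoint.one _).sub hsmul
    have h1 : adjoint (adjoint m ∘L v ^ N) = (v ^ N) ∘L m := by
      rw [adjoint_comp, adjoint_adjoint, ← star_eq_adjoint, (hvsa.pow N).star_eq]
    rw [h1]
    calc ((v ^ N) ∘L m) ∘L (adjoint m ∘L v ^ N)
        = v ^ N * a * v ^ N := by
          simp only [ContinuousLinearMap.mul_def, ha_def, comp_assoc]
      _ = a * (v ^ N * v ^ N) := by rw [← hcomm.eq, mul_assoc]
  have hnormsq : ‖adjoint m ∘L v ^ N‖ * ‖adjoint m ∘L v ^ N‖ ≤ ε ^ 2 := by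
    rw [← norm_adjoint_comp_self, hTT, ← pow_add]
    have h2 : cfc (fun t : ℝ => t * (1 - c * t) ^ (N + N)) a = a * v ^ (N + N) := by
      have h1 : cfc (fun t : ℝ => 1 - c * t) a = v := by
        rw [cfc_sub _ _ a, cfc_const_mul c (fun t : ℝ => t) a, cfc_const (1 : ℝ) a,
          cfc_id' ℝ a, hv_def, Algebra.algebraMap_eq_smul_one, one_smul]
      rw [cfc_mul _ _ a, cfc_pow (fun t : ℝ => 1 - c * t) (N + N) a, h1, cfc_id' ℝ a]
    rw [← h2]
    refine norm_cfc_le (by positivity) fun x hx => ?_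
    have hx0 := hpos x hx
    have hx1 := hspec_le x hx
    have hc1 : 0 ≤ 1 - c * x := by
      rw [hc_def]
      have : (‖a‖ + 1)⁻¹ * x ≤ 1 := by
        rw [inv_mul_le_iff₀ (by positivity)]; nlinarith [norm_nonneg a]
      linarith
    have hcx0 : 0 ≤ c * x := by
      rw [hc_def]
      exact mul_nonneg (inv_nonneg.mpr (by positivity)) hx0
    have hmono : x * (1 - c * x) ^ (N + N) ≤ x * (1 - c * x) ^ N := by
      apply mul_le_mul_of_nonneg_left _ hx0
      exact pow_le_pow_of_le_one hc1 (by linarith) (by omega)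
    have hfin := hN x hx0 hx1
    rw [Real.norm_eq_abs, abs_of_nonneg (mul_nonneg hx0 (pow_nonneg hc1 _))]
    rw [abs_of_nonneg (mul_nonneg hx0 (pow_nonneg hc1 _))] at hfin
    exact le_trans hmono hfin
  nlinarith [norm_nonneg (adjoint m ∘L v ^ N), hε]

/-- The conjugation map `w ↦ (adjoint m) ∘L w ∘L n` as a linear map. -/
def conjMap (m n : H →L[ℂ] K) : (K →L[ℂ] K) →ₗ[ℂ] (H →L[ℂ] H) where
  toFun w := (adjoint m) ∘L w ∘L n
  map_add' w₁ w₂ := by simp only [add_comp, comp_add]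
  map_smul' c w := by simp only [RingHom.id_apply]; rw [smul_comp, comp_smulₛₗ]; rfl

lemma conjMap_cont (m n : H →L[ℂ] K) : Continuous (conjMap m n) := by
  show Continuous fun w : K →L[ℂ] K => (adjoint m) ∘L w ∘L n
  exact continuous_const.clm_comp (continuous_id.clm_comp continuous_const)

lemma key (M : Submodule ℂ (H →L[ℂ] K))
    (hTRO : ∀ m ∈ M, ∀ n ∈ M, ∀ l ∈ M, m ∘L (adjoint n) ∘L l ∈ M)
    (A : Submodule ℂ (H →L[ℂ] H)) (B : Submodule ℂ (K →L[ℂ] K))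
    (hA : (A : Set (H →L[ℂ] H)) =
      csp {T | ∃ m ∈ M, ∃ b ∈ B, ∃ n ∈ M, T = (adjoint m) ∘L b ∘L n}) :
    closure {T : H →L[ℂ] H | ∃ a ∈ A, ∃ c ∈ csp {S : H →L[ℂ] H | ∃ m ∈ M, ∃ n ∈ M, S = (adjoint m) ∘L n}, T = a + c} = csp {T : H →L[ℂ] H | ∃ m ∈ M, ∃ b ∈ closure {S : K →L[ℂ] K | ∃ b' ∈ B, ∃ d ∈ csp {R : K →L[ℂ] K | ∃ k ∈ M, ∃ l ∈ M, R = k ∘L (adjoint l)}, S = b' + d}, ∃ n ∈ M, T = (adjoint m) ∘L b ∘L n} := by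
  set Csub : Submodule ℂ (H →L[ℂ] H) := (Submodule.span ℂ {S : H →L[ℂ] H | ∃ m ∈ M, ∃ n ∈ M, S = (adjoint m) ∘L n}).topologicalClosure with hCsub
  set Rsub : Submodule ℂ (H →L[ℂ] H) := (Submodule.span ℂ {T : H →L[ℂ] H | ∃ m ∈ M, ∃ b ∈ closure {S : K →L[ℂ] K | ∃ b' ∈ B, ∃ d ∈ csp {R : K →L[ℂ] K | ∃ k ∈ M, ∃ l ∈ M, R = k ∘L (adjoint l)}, S = b' + d}, ∃ n ∈ M, T = (adjoint m) ∘L b ∘L n}).topologicalClosure with hRsub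
  have hRclosed : IsClosed (Rsub : Set (H →L[ℂ] H)) :=
    Submodule.isClosed_topologicalClosure _
  have hRcoe : (Rsub : Set (H →L[ℂ] H)) = csp {T : H →L[ℂ] H | ∃ m ∈ M, ∃ b ∈ closure {S : K →L[ℂ] K | ∃ b' ∈ B, ∃ d ∈ csp {R : K →L[ℂ] K | ∃ k ∈ M, ∃ l ∈ M, R = k ∘L (adjoint l)}, S = b' + d}, ∃ n ∈ M, T = (adjoint m) ∘L b ∘L n} := Submodule.topologicalClosure_coe _
  have hCcoe : (Csub : Set (H →L[ℂ] H)) = csp {S : H →L[ℂ] H | ∃ m ∈ M, ∃ n ∈ M, S = (adjoint m) ∘L n} := Submodule.topologicalClosure_coe _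
  have hzeroD : (0 : K →L[ℂ] K) ∈ csp {R : K →L[ℂ] K | ∃ k ∈ M, ∃ l ∈ M, R = k ∘L (adjoint l)} := subset_closure (Submodule.zero_mem _)
  have hBsubB0 : ∀ b' ∈ B, b' ∈ closure {S : K →L[ℂ] K | ∃ b' ∈ B, ∃ d ∈ csp {R : K →L[ℂ] K | ∃ k ∈ M, ∃ l ∈ M, R = k ∘L (adjoint l)}, S = b' + d} := fun b' hb' =>
    subset_closure ⟨b', hb', 0, hzeroD, (add_zero b').symm⟩
  have hDsubB0 : ∀ d ∈ csp {R : K →L[ℂ] K | ∃ k ∈ M, ∃ l ∈ M, R = k ∘L (adjoint l)}, d ∈ closure {S : K →L[ℂ] K | ∃ b' ∈ B, ∃ d ∈ csp {R : K →L[ℂ] K | ∃ k ∈ M, ∃ l ∈ M, R = k ∘L (adjoint l)}, S = b' + d} := fun d hd =>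
    subset_closure ⟨0, B.zero_mem, d, hd, (zero_add d).symm⟩
  have hA_sub : (A : Set (H →L[ℂ] H)) ⊆ (Rsub : Set (H →L[ℂ] H)) := by
    rw [hA]
    refine csp_subset hRclosed ?_
    rintro T ⟨m, hm, b, hb, n, hn, rfl⟩
    refine Submodule.le_topologicalClosure _ (Submodule.subset_span ?_)
    exact ⟨m, hm, b, hBsubB0 b hb, n, hn, rfl⟩
  have hCs_sub : ∀ m ∈ M, ∀ n ∈ M, (adjoint m) ∘L n ∈ Rsub := by
    intro m hm n hn
    have hmem : ∀ ε : ℝ, 0 < ε →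
        ∃ y ∈ (Rsub : Set (H →L[ℂ] H)), dist ((adjoint m) ∘L n) y < ε := by
      intro ε hε
      have hεn : 0 < ε / (‖n‖ + 1) := by positivity
      obtain ⟨P, hP, hPnorm⟩ := approx m hεn
      refine ⟨conjMap m n P, ?_, ?_⟩
      · have hmapsp : (Submodule.span ℂ
            {w : K →L[ℂ] K | ∃ k : ℕ, w = (m ∘L adjoint m) ^ (k + 1)}).map (conjMap m n)
            ≤ Submodule.span ℂ {T : H →L[ℂ] H | ∃ m ∈ M, ∃ b ∈ closure {S : K →L[ℂ] K | ∃ b' ∈ B, ∃ d ∈ csp {R : K →L[ℂ] K | ∃ k ∈ M, ∃ l ∈ M, R = k ∘L (adjoint l)}, S = b' + d}, ∃ n ∈ M, T = (adjoint m) ∘L b ∘L n} := by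
          rw [Submodule.map_span, Submodule.span_le]
          rintro _ ⟨w, ⟨k, rfl⟩, rfl⟩
          refine Submodule.subset_span ⟨m, hm, (m ∘L adjoint m) ^ (k + 1), ?_, n, hn, rfl⟩
          exact hDsubB0 _ (subset_closure (Submodule.subset_span (pow_mem_Dset M hTRO hm k)))
        exact Submodule.le_topologicalClosure _ (hmapsp ⟨P, hP, rfl⟩)
      · rw [dist_eq_norm]
        have heq : (adjoint m) ∘L n - conjMap m n P
            = ((adjoint m) - (adjoint m) ∘L P) ∘L n := by
          show (adjoint m) ∘L n - (adjoint m) ∘L P ∘L n = _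
          rw [sub_comp, comp_assoc]
        rw [heq]
        calc ‖((adjoint m) - (adjoint m) ∘L P) ∘L n‖
            ≤ ‖(adjoint m) - (adjoint m) ∘L P‖ * ‖n‖ := opNorm_comp_le _ _
          _ ≤ (ε / (‖n‖ + 1)) * ‖n‖ := mul_le_mul_of_nonneg_right hPnorm (norm_nonneg n)
          _ < ε := by
              rw [div_mul_eq_mul_div, div_lt_iff₀ (by positivity)]
              nlinarith [norm_nonneg n]
    have hcl : (adjoint m) ∘L n ∈ closure (Rsub : Set (H →L[ℂ] H)) :=
      Metric.mem_closure_iff.mpr hmem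
    rwa [hRclosed.closure_eq] at hcl
  have hdir1 : closure {T : H →L[ℂ] H | ∃ a ∈ A, ∃ c ∈ csp {S : H →L[ℂ] H | ∃ m ∈ M, ∃ n ∈ M, S = (adjoint m) ∘L n}, T = a + c} ⊆ csp {T : H →L[ℂ] H | ∃ m ∈ M, ∃ b ∈ closure {S : K →L[ℂ] K | ∃ b' ∈ B, ∃ d ∈ csp {R : K →L[ℂ] K | ∃ k ∈ M, ∃ l ∈ M, R = k ∘L (adjoint l)}, S = b' + d}, ∃ n ∈ M, T = (adjoint m) ∘L b ∘L n} := by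
    rw [← hRcoe]
    refine closure_minimal ?_ hRclosed
    rintro T ⟨a, ha, c, hc, rfl⟩
    refine Rsub.add_mem (hA_sub ha) ?_
    refine csp_subset hRclosed ?_ hc
    rintro S ⟨m, hm, n, hn, rfl⟩
    exact hCs_sub m hm n hn
  have hdir2 : csp {T : H →L[ℂ] H | ∃ m ∈ M, ∃ b ∈ closure {S : K →L[ℂ] K | ∃ b' ∈ B, ∃ d ∈ csp {R : K →L[ℂ] K | ∃ k ∈ M, ∃ l ∈ M, R = k ∘L (adjoint l)}, S = b' + d}, ∃ n ∈ M, T = (adjoint m) ∘L b ∘L n} ⊆ closure {T : H →L[ℂ] H | ∃ a ∈ A, ∃ c ∈ csp {S : H →L[ℂ] H | ∃ m ∈ M, ∃ n ∈ M, S = (adjoint m) ∘L n}, T = a + c} := by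
    have hsetEq : {T : H →L[ℂ] H | ∃ a ∈ A, ∃ c ∈ csp {S : H →L[ℂ] H | ∃ m ∈ M, ∃ n ∈ M, S = (adjoint m) ∘L n}, T = a + c}
        = ((A ⊔ Csub : Submodule ℂ (H →L[ℂ] H)) : Set (H →L[ℂ] H)) := by
      ext T
      simp only [Set.mem_setOf_eq, SetLike.mem_coe, Submodule.mem_sup]
      constructor
      · rintro ⟨a, ha, c, hc, rfl⟩
        exact ⟨a, ha, c, by rw [← SetLike.mem_coe, hCcoe]; exact hc, rfl⟩
      · rintro ⟨a, ha, c, hc, rfl⟩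
        exact ⟨a, ha, c, by rw [← SetLike.mem_coe, hCcoe] at hc; exact hc, rfl⟩
    rw [hsetEq, ← Submodule.topologicalClosure_coe]
    refine csp_subset (Submodule.isClosed_topologicalClosure _) ?_
    rintro T ⟨m, hm, b, hb, n, hn, rfl⟩
    have hmapsTo : Set.MapsTo (conjMap m n)
        {S : K →L[ℂ] K | ∃ b' ∈ B, ∃ d ∈ csp {R : K →L[ℂ] K | ∃ k ∈ M, ∃ l ∈ M, R = k ∘L (adjoint l)}, S = b' + d}
        ((A ⊔ Csub : Submodule ℂ (H →L[ℂ] H)) : Set (H →L[ℂ] H)) := by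
      rintro S ⟨b', hb', d, hd, rfl⟩
      rw [map_add]
      refine (A ⊔ Csub).add_mem (Submodule.mem_sup_left ?_) (Submodule.mem_sup_right ?_)
      · have hb'A : conjMap m n b' ∈ (A : Set (H →L[ℂ] H)) := by
          rw [hA]
          exact subset_closure (Submodule.subset_span ⟨m, hm, b', hb', n, hn, rfl⟩)
        exact hb'A
      · have hdC : conjMap m n d ∈ csp {S : H →L[ℂ] H | ∃ m ∈ M, ∃ n ∈ M, S = (adjoint m) ∘L n} := by
          refine map_csp (conjMap m n) (conjMap_cont m n) ?_ hd
          rintro x ⟨k, hk, l, hl, rfl⟩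
          refine Submodule.subset_span ⟨l ∘L (adjoint k) ∘L m, hTRO l hl k hk m hm, n, hn, ?_⟩
          show (adjoint m) ∘L (k ∘L (adjoint l)) ∘L n = _
          simp only [adjoint_comp, adjoint_adjoint, comp_assoc]
        rw [← SetLike.mem_coe, hCcoe]
        exact hdC
    have hLb : conjMap m n b ∈
        closure ((A ⊔ Csub : Submodule ℂ (H →L[ℂ] H)) : Set (H →L[ℂ] H)) :=
      map_mem_closure (conjMap_cont m n) hb hmapsTo
    rw [← Submodule.topologicalClosure_coe] at hLb
    exact hLb
  exact Set.Subset.antisymm hdir1 hdir2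

/-- The adjoint submodule `M* = {T | T* ∈ M}`. -/
def adjSub (M : Submodule ℂ (H →L[ℂ] K)) : Submodule ℂ (K →L[ℂ] H) where
  carrier := {T | adjoint T ∈ M}
  add_mem' := fun {a b} ha hb => by
    simp only [Set.mem_setOf_eq, map_add] at *
    exact M.add_mem ha hb
  zero_mem' := by
    simp only [Set.mem_setOf_eq, map_zero]
    exact M.zero_mem
  smul_mem' := fun c a ha => by
    simp only [Set.mem_setOf_eq] at *
    rw [show adjoint (c • a) = (starRingEnd ℂ c) • adjoint a from map_smulₛₗ adjoint c a]
    exact M.smul_mem _ ha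

lemma mem_adjSub {M : Submodule ℂ (H →L[ℂ] K)} {T : K →L[ℂ] H} :
    T ∈ adjSub M ↔ adjoint T ∈ M := Iff.rfl

lemma adj_adj_mem {M : Submodule ℂ (H →L[ℂ] K)} {m : H →L[ℂ] K} (hm : m ∈ M) :
    adjoint m ∈ adjSub M := by
  rw [mem_adjSub, adjoint_adjoint]; exact hm

lemma eqD_lemma (M : Submodule ℂ (H →L[ℂ] K)) :
    {S : K →L[ℂ] K | ∃ m' ∈ adjSub M, ∃ n' ∈ adjSub M, S = (adjoint m') ∘L n'}
      = {S : K →L[ℂ] K | ∃ k ∈ M, ∃ l ∈ M, S = k ∘L (adjoint l)} := by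
  ext S
  constructor
  · rintro ⟨m', hm', n', hn', rfl⟩
    exact ⟨adjoint m', hm', adjoint n', hn', by rw [adjoint_adjoint]⟩
  · rintro ⟨k, hk, l, hl, rfl⟩
    exact ⟨adjoint k, adj_adj_mem hk, adjoint l, adj_adj_mem hl, by rw [adjoint_adjoint]⟩

lemma eqC_lemma (M : Submodule ℂ (H →L[ℂ] K)) :
    {R : H →L[ℂ] H | ∃ k' ∈ adjSub M, ∃ l' ∈ adjSub M, R = k' ∘L (adjoint l')}
      = {R : H →L[ℂ] H | ∃ k ∈ M, ∃ l ∈ M, R = (adjoint k) ∘L l} := by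
  ext R
  constructor
  · rintro ⟨k', hk', l', hl', rfl⟩
    exact ⟨adjoint k', hk', adjoint l', hl', by rw [adjoint_adjoint]⟩
  · rintro ⟨k, hk, l, hl, rfl⟩
    exact ⟨adjoint k, adj_adj_mem hk, adjoint l, adj_adj_mem hl, by rw [adjoint_adjoint]⟩

lemma eqGenSub (M : Submodule ℂ (H →L[ℂ] K)) (A : Submodule ℂ (H →L[ℂ] H)) :
    {T : K →L[ℂ] K | ∃ m ∈ adjSub M, ∃ b ∈ A, ∃ n ∈ adjSub M, T = (adjoint m) ∘L b ∘L n}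
      = {T : K →L[ℂ] K | ∃ m ∈ M, ∃ a ∈ A, ∃ n ∈ M, T = m ∘L a ∘L (adjoint n)} := by
  ext T
  constructor
  · rintro ⟨m', hm', b, hb, n', hn', rfl⟩
    exact ⟨adjoint m', hm', b, hb, adjoint n', hn', by rw [adjoint_adjoint]⟩
  · rintro ⟨m, hm, a, ha, n, hn, rfl⟩
    exact ⟨adjoint m, adj_adj_mem hm, a, ha, adjoint n, adj_adj_mem hn, by rw [adjoint_adjoint]⟩

lemma eqGenSet (M : Submodule ℂ (H →L[ℂ] K)) (W : Set (H →L[ℂ] H)) :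
    {T : K →L[ℂ] K | ∃ m ∈ adjSub M, ∃ b ∈ W, ∃ n ∈ adjSub M, T = (adjoint m) ∘L b ∘L n}
      = {T : K →L[ℂ] K | ∃ m ∈ M, ∃ a ∈ W, ∃ n ∈ M, T = m ∘L a ∘L (adjoint n)} := by
  ext T
  constructor
  · rintro ⟨m', hm', b, hb, n', hn', rfl⟩
    exact ⟨adjoint m', hm', b, hb, adjoint n', hn', by rw [adjoint_adjoint]⟩
  · rintro ⟨m, hm, a, ha, n, hn, rfl⟩
    exact ⟨adjoint m, adj_adj_mem hm, a, ha, adjoint n, adj_adj_mem hn, by rw [adjoint_adjoint]⟩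

end TROaux


set_option maxHeartbeats 1000000

/-- Let `M ⊆ B(H,K)` be a TRO and `A ⊆ B(H)`, `B ⊆ B(K)` norm-closed subalgebras with
`A = closure span (M* B M)` and `B = closure span (M A M*)`. Set
`C = closure span (M* M)`, `D = closure span (M M*)`, `A₀ = closure (A + C)`,
`B₀ = closure (B + D)`. Then `A₀ = closure span (M* B₀ M)` and
`B₀ = closure span (M A₀ M*)`. -/
theorem stmt7 {H K : Type*}
    [NormedAddCommGroup H] [InnerProductSpace ℂ H] [CompleteSpace H]
    [NormedAddCommGroup K] [InnerProductSpace ℂ K] [CompleteSpace K]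
    (M : Submodule ℂ (H →L[ℂ] K)) (hMclosed : IsClosed (M : Set (H →L[ℂ] K)))
    (hTRO : ∀ m ∈ M, ∀ n ∈ M, ∀ l ∈ M, m ∘L (adjoint n) ∘L l ∈ M)
    (A : Submodule ℂ (H →L[ℂ] H)) (hAclosed : IsClosed (A : Set (H →L[ℂ] H)))
    (hAmul : ∀ a ∈ A, ∀ b ∈ A, a ∘L b ∈ A)
    (B : Submodule ℂ (K →L[ℂ] K)) (hBclosed : IsClosed (B : Set (K →L[ℂ] K)))
    (hBmul : ∀ a ∈ B, ∀ b ∈ B, a ∘L b ∈ B)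
    (hA : (A : Set (H →L[ℂ] H)) =
      csp {T | ∃ m ∈ M, ∃ b ∈ B, ∃ n ∈ M, T = (adjoint m) ∘L b ∘L n})
    (hB : (B : Set (K →L[ℂ] K)) =
      csp {T | ∃ m ∈ M, ∃ a ∈ A, ∃ n ∈ M, T = m ∘L a ∘L (adjoint n)}) :
    (closure {T : H →L[ℂ] H | ∃ a ∈ A,
        ∃ c ∈ csp {S : H →L[ℂ] H | ∃ m ∈ M, ∃ n ∈ M, S = (adjoint m) ∘L n}, T = a + c} =
      csp {T : H →L[ℂ] H | ∃ m ∈ M,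
        ∃ b ∈ closure {S : K →L[ℂ] K | ∃ b' ∈ B,
          ∃ d ∈ csp {R : K →L[ℂ] K | ∃ k ∈ M, ∃ l ∈ M, R = k ∘L (adjoint l)}, S = b' + d},
        ∃ n ∈ M, T = (adjoint m) ∘L b ∘L n}) ∧
    (closure {T : K →L[ℂ] K | ∃ b ∈ B,
        ∃ d ∈ csp {S : K →L[ℂ] K | ∃ k ∈ M, ∃ l ∈ M, S = k ∘L (adjoint l)}, T = b + d} =
      csp {T : K →L[ℂ] K | ∃ m ∈ M,
        ∃ a ∈ closure {S : H →L[ℂ] H | ∃ a' ∈ A,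
          ∃ c ∈ csp {R : H →L[ℂ] H | ∃ k ∈ M, ∃ l ∈ M, R = (adjoint k) ∘L l}, S = a' + c},
        ∃ n ∈ M, T = m ∘L a ∘L (adjoint n)}) := by
  constructor
  · exact TROaux.key M hTRO A B hA
  · have hTRO' : ∀ m' ∈ TROaux.adjSub M, ∀ n' ∈ TROaux.adjSub M, ∀ l' ∈ TROaux.adjSub M,
        m' ∘L (adjoint n') ∘L l' ∈ TROaux.adjSub M := by
      intro m' hm' n' hn' l' hl'
      rw [TROaux.mem_adjSub] at hm' hn' hl' ⊢
      have h := hTRO (adjoint l') hl' (adjoint n') hn' (adjoint m') hm'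
      have heq : adjoint (m' ∘L (adjoint n') ∘L l')
          = (adjoint l') ∘L (adjoint (adjoint n')) ∘L (adjoint m') := by
        simp only [adjoint_comp, comp_assoc]
      rw [heq]; exact h
    have hB' : (B : Set (K →L[ℂ] K)) = csp {T : K →L[ℂ] K | ∃ m ∈ TROaux.adjSub M,
        ∃ b ∈ A, ∃ n ∈ TROaux.adjSub M, T = (adjoint m) ∘L b ∘L n} := by
      rw [hB, ← TROaux.eqGenSub M A]
    have h2 := TROaux.key (TROaux.adjSub M) hTRO' B A hB'
    rw [TROaux.eqC_lemma M, TROaux.eqD_lemma M, TROaux.eqGenSet M] at h2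
    exact h2
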